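/- Assume ‖A‖₂ < 1. Then the successive differences of the IRLS iterates are square-summable, with (1 − ‖A‖₂²) Σ_{n=1}^∞ ‖x^n − x^{n+1}‖₂² ≤ G(x¹, x¹, w¹, ε₁); in particular ‖x^n − x^{n+1}‖₂ → 0 as n → ∞. -/

import Mathlib

open Finset Filter Matrix Topology

/-- Squared Euclidean residual plus generalized sparsity penalty:
`F(x) = ‖Ax - b‖₂² + 2 ∑ₖ λₖ |xₖ|^{qₖ}`. -/
noncomputable def Ffun {M N : ℕ} (A : Matrix (Fin M) (Fin N) ℝ) (b : Fin M → ℝ)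
    (lam q : Fin N → ℝ) (x : Fin N → ℝ) : ℝ :=
  (∑ i, (A.mulVec x i - b i) ^ 2) + 2 * ∑ k, lam k * |x k| ^ (q k)

/-- The surrogate functional `G(x,a,w,ε)`. -/
noncomputable def Gfun {M N : ℕ} (A : Matrix (Fin M) (Fin N) ℝ) (b : Fin M → ℝ)
    (lam q : Fin N → ℝ) (x a w : Fin N → ℝ) (ε : ℝ) : ℝ :=
  (∑ i, (A.mulVec x i - b i) ^ 2) - (∑ i, (A.mulVec (x - a) i) ^ 2)
    + (∑ k, (x k - a k) ^ 2)
    + ∑ k ∈ Finset.univ.filter (fun k => 1 ≤ q k ∧ q k < 2),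
        lam k * (q k * w k * ((x k) ^ 2 + ε ^ 2)
          + (2 - q k) * (w k) ^ (q k / (q k - 2)))
    + ∑ k ∈ Finset.univ.filter (fun k => q k = 2),
        2 * lam k * ((x k) ^ 2 + ε ^ 2) * ((w k) ^ 2 - 2 * w k + 2)

/-- Euclidean (ℓ²) norm on `Fin N → ℝ`. -/
noncomputable def l2 {N : ℕ} (v : Fin N → ℝ) : ℝ :=
  Real.sqrt (∑ k, (v k) ^ 2)

/-- Spectral (ℓ² operator) norm of a matrix. -/
noncomputable def specNorm {M N : ℕ} (A : Matrix (Fin M) (Fin N) ℝ) : ℝ :=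
  ‖LinearMap.toContinuousLinearMap (Matrix.toEuclideanLin A)‖

lemma irls_swap {M N : ℕ} (A : Matrix (Fin M) (Fin N) ℝ) (d : Fin N → ℝ) (c : Fin M → ℝ) :
    ∑ i, A.mulVec d i * c i = ∑ k, d k * Aᵀ.mulVec c k := by
  simp only [Matrix.mulVec, dotProduct, Matrix.transpose_apply, Finset.sum_mul,
    Finset.mul_sum]
  rw [Finset.sum_comm]
  exact Finset.sum_congr rfl fun k _ => Finset.sum_congr rfl fun i _ => by ring

lemma irls_spec {M N : ℕ} (A : Matrix (Fin M) (Fin N) ℝ) (v : Fin N → ℝ) :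
    ∑ i, (A.mulVec v i) ^ 2 ≤ specNorm A ^ 2 * ∑ k, (v k) ^ 2 := by
  set L := LinearMap.toContinuousLinearMap (Matrix.toEuclideanLin A) with hL
  set v' : EuclideanSpace ℝ (Fin N) := (WithLp.equiv 2 (Fin N → ℝ)).symm v with hv'
  have h1 : ‖L v'‖ ≤ ‖L‖ * ‖v'‖ := L.le_opNorm v'
  have h2 : ‖L v'‖ ^ 2 = ∑ i, (A.mulVec v i) ^ 2 := by
    have : L v' = (WithLp.equiv 2 (Fin M → ℝ)).symm (A.mulVec v) := by
      simp [hL, hv', Matrix.toEuclideanLin_apply_piLp_toLp]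
    rw [this, EuclideanSpace.norm_eq]
    rw [Real.sq_sqrt (by positivity)]
    simp [sq_abs]
  have h3 : ‖v'‖ ^ 2 = ∑ k, (v k) ^ 2 := by
    rw [EuclideanSpace.norm_eq, Real.sq_sqrt (by positivity)]
    simp [hv', sq_abs]
  have h4 := mul_self_le_mul_self (norm_nonneg (L v')) h1
  calc ∑ i, (A.mulVec v i) ^ 2 = ‖L v'‖ ^ 2 := h2.symm
    _ ≤ (‖L‖ * ‖v'‖) ^ 2 := by rw [sq, sq]; exact h4
    _ = specNorm A ^ 2 * ∑ k, (v k) ^ 2 := by rw [mul_pow, h3, specNorm, hL]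

lemma irls_Gdiff {M N : ℕ} (A : Matrix (Fin M) (Fin N) ℝ) (b : Fin M → ℝ)
    (lam q : Fin N → ℝ) (hq : ∀ k, 1 ≤ q k ∧ q k ≤ 2)
    (wv : Fin N → ℝ) (hw2 : ∀ k, q k = 2 → wv k = 1) (ε : ℝ) (x y a : Fin N → ℝ) :
    Gfun A b lam q x a wv ε - Gfun A b lam q y a wv ε
      = ∑ k, ((1 + lam k * q k * wv k) * ((x k) ^ 2 - (y k) ^ 2)
          - 2 * (a k + Aᵀ.mulVec b k - Aᵀ.mulVec (A.mulVec a) k) * (x k - y k)) := by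
  have hAB : ∀ z : Fin N → ℝ, (∑ i, (A.mulVec z i - b i) ^ 2) - (∑ i, (A.mulVec (z - a) i) ^ 2)
      = (∑ i, A.mulVec z i * (2 * (A.mulVec a i - b i)))
        + ∑ i, ((b i) ^ 2 - (A.mulVec a i) ^ 2) := by
    intro z
    rw [← Finset.sum_sub_distrib, ← Finset.sum_add_distrib]
    refine Finset.sum_congr rfl fun i _ => ?_
    rw [Matrix.mulVec_sub]
    simp only [Pi.sub_apply]
    ring
  have hpen : ∀ z : Fin N → ℝ,
      (∑ k ∈ Finset.univ.filter (fun k => 1 ≤ q k ∧ q k < 2),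
        lam k * (q k * wv k * ((z k) ^ 2 + ε ^ 2)
          + (2 - q k) * (wv k) ^ (q k / (q k - 2))))
      + (∑ k ∈ Finset.univ.filter (fun k => q k = 2),
        2 * lam k * ((z k) ^ 2 + ε ^ 2) * ((wv k) ^ 2 - 2 * wv k + 2))
      = (∑ k, lam k * q k * wv k * ((z k) ^ 2 + ε ^ 2))
        + ∑ k ∈ Finset.univ.filter (fun k => 1 ≤ q k ∧ q k < 2),
            lam k * (2 - q k) * (wv k) ^ (q k / (q k - 2)) := by
    intro z
    rw [Finset.sum_filter, Finset.sum_filter, Finset.sum_filter, ← Finset.sum_add_distrib,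
      ← Finset.sum_add_distrib]
    refine Finset.sum_congr rfl fun k _ => ?_
    by_cases hP : 1 ≤ q k ∧ q k < 2
    · have hne : q k ≠ 2 := ne_of_lt hP.2
      rw [if_pos hP, if_neg hne, if_pos hP]
      ring
    · have h2 : q k = 2 := le_antisymm (hq k).2
        (not_lt.1 fun hlt => hP ⟨(hq k).1, hlt⟩)
      rw [if_neg hP, if_pos h2, if_neg hP, hw2 k h2, h2]
      ring
  have hG : ∀ z : Fin N → ℝ, Gfun A b lam q z a wv ε
      = (∑ i, A.mulVec z i * (2 * (A.mulVec a i - b i)))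
        + (∑ k, ((z k - a k) ^ 2 + lam k * q k * wv k * ((z k) ^ 2 + ε ^ 2)))
        + ((∑ i, ((b i) ^ 2 - (A.mulVec a i) ^ 2))
          + ∑ k ∈ Finset.univ.filter (fun k => 1 ≤ q k ∧ q k < 2),
              lam k * (2 - q k) * (wv k) ^ (q k / (q k - 2))) := by
    intro z
    unfold Gfun
    rw [Finset.sum_add_distrib]
    linarith [hAB z, hpen z]
  have key : (∑ i, A.mulVec x i * (2 * (A.mulVec a i - b i)))
      - (∑ i, A.mulVec y i * (2 * (A.mulVec a i - b i)))
      = ∑ k, (x k - y k) * (2 * (Aᵀ.mulVec (A.mulVec a) k - Aᵀ.mulVec b k)) := by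
    have h1 : (∑ i, A.mulVec x i * (2 * (A.mulVec a i - b i)))
        - (∑ i, A.mulVec y i * (2 * (A.mulVec a i - b i)))
        = ∑ i, A.mulVec (x - y) i * (2 * (A.mulVec a i - b i)) := by
      rw [← Finset.sum_sub_distrib]
      refine Finset.sum_congr rfl fun i _ => ?_
      rw [Matrix.mulVec_sub]
      simp only [Pi.sub_apply]
      ring
    rw [h1, irls_swap]
    refine Finset.sum_congr rfl fun k _ => ?_
    simp only [Pi.sub_apply]
    congr 1
    simp only [Matrix.mulVec, dotProduct, Matrix.transpose_apply]
    rw [mul_sub, Finset.mul_sum, Finset.mul_sum, ← Finset.sum_sub_distrib]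
    exact Finset.sum_congr rfl fun i _ => by ring
  have hfin : (∑ k, (x k - y k) * (2 * (Aᵀ.mulVec (A.mulVec a) k - Aᵀ.mulVec b k)))
      + ((∑ k, ((x k - a k) ^ 2 + lam k * q k * wv k * ((x k) ^ 2 + ε ^ 2)))
        - (∑ k, ((y k - a k) ^ 2 + lam k * q k * wv k * ((y k) ^ 2 + ε ^ 2))))
      = ∑ k, ((1 + lam k * q k * wv k) * ((x k) ^ 2 - (y k) ^ 2)
          - 2 * (a k + Aᵀ.mulVec b k - Aᵀ.mulVec (A.mulVec a) k) * (x k - y k)) := by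
    rw [← Finset.sum_sub_distrib, ← Finset.sum_add_distrib]
    exact Finset.sum_congr rfl fun k _ => by ring
  rw [hG x, hG y]
  linarith [key, hfin]

lemma irls_penalty (qk s s' wold : ℝ) (hq1 : 1 ≤ qk) (hq2 : qk < 2)
    (hs' : 0 < s') (hle : s' ≤ s) (hw : 0 < wold) :
    qk * (s' ^ ((qk - 2) / 2)) * s' + (2 - qk) * (s' ^ ((qk - 2) / 2)) ^ (qk / (qk - 2))
      ≤ qk * wold * s + (2 - qk) * wold ^ (qk / (qk - 2)) := by
  have hqne : qk - 2 ≠ 0 := by linarith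
  have hs : 0 < s := lt_of_lt_of_le hs' hle
  have e1 : (s' ^ ((qk - 2) / 2)) ^ (qk / (qk - 2)) = s' ^ (qk / 2) := by
    rw [← Real.rpow_mul hs'.le]
    congr 1
    field_simp
  have e2 : s' ^ ((qk - 2) / 2) * s' = s' ^ (qk / 2) := by
    nth_rewrite 2 [← Real.rpow_one s']
    rw [← Real.rpow_add hs']
    congr 1
    ring
  have am : s ^ (qk / 2) ≤ qk / 2 * (wold * s) + (2 - qk) / 2 * wold ^ (qk / (qk - 2)) := by
    have h := Real.geom_mean_le_arith_mean2_weighted (w₁ := qk / 2) (w₂ := (2 - qk) / 2)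
      (p₁ := wold * s) (p₂ := wold ^ (qk / (qk - 2))) (by linarith) (by linarith)
      (by positivity) (Real.rpow_nonneg hw.le _) (by ring)
    refine le_trans (le_of_eq ?_) h
    rw [Real.mul_rpow hw.le hs.le, ← Real.rpow_mul hw.le]
    have he : qk / (qk - 2) * ((2 - qk) / 2) = -(qk / 2) := by
      field_simp
      ring
    rw [he, mul_comm (wold ^ (qk / 2)) (s ^ (qk / 2)), mul_assoc, ← Real.rpow_add hw]
    simp
  have mono : s' ^ (qk / 2) ≤ s ^ (qk / 2) :=
    Real.rpow_le_rpow hs'.le hle (by linarith)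
  have lhs_eq : qk * (s' ^ ((qk - 2) / 2)) * s'
      + (2 - qk) * (s' ^ ((qk - 2) / 2)) ^ (qk / (qk - 2))
      = 2 * s' ^ (qk / 2) := by
    rw [e1, mul_assoc, e2]
    ring
  rw [lhs_eq]
  have h3 : 2 * s ^ (qk / 2) ≤ qk * (wold * s) + (2 - qk) * wold ^ (qk / (qk - 2)) := by
    linarith
  have h4 : qk * (wold * s) = qk * wold * s := by ring
  linarith [h3, mono, h4]

lemma irls_Gshift {M N : ℕ} (A : Matrix (Fin M) (Fin N) ℝ) (b : Fin M → ℝ)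
    (lam q : Fin N → ℝ) (x a wv : Fin N → ℝ) (ε : ℝ) :
    Gfun A b lam q x a wv ε
      = Gfun A b lam q x x wv ε - (∑ i, (A.mulVec (x - a) i) ^ 2)
        + ∑ k, (x k - a k) ^ 2 := by
  unfold Gfun
  simp only [sub_self, Matrix.mulVec_zero, Pi.zero_apply, ne_eq, OfNat.ofNat_ne_zero,
    not_false_iff, zero_pow, Finset.sum_const_zero]
  ring

lemma irls_Gnonneg {M N : ℕ} (A : Matrix (Fin M) (Fin N) ℝ) (b : Fin M → ℝ)
    (lam q : Fin N → ℝ) (hlam : ∀ k, 0 < lam k) (hq : ∀ k, 1 ≤ q k ∧ q k ≤ 2)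
    (x wv : Fin N → ℝ) (hwv : ∀ k, 0 < wv k) (ε : ℝ) :
    0 ≤ Gfun A b lam q x x wv ε := by
  unfold Gfun
  simp only [sub_self, Matrix.mulVec_zero, Pi.zero_apply, ne_eq, OfNat.ofNat_ne_zero,
    not_false_iff, zero_pow, Finset.sum_const_zero, sub_zero, add_zero]
  have h1 : (0:ℝ) ≤ ∑ i, (A.mulVec x i - b i) ^ 2 := Finset.sum_nonneg fun i _ => sq_nonneg _
  have h2 : (0:ℝ) ≤ ∑ k ∈ Finset.univ.filter (fun k => 1 ≤ q k ∧ q k < 2),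
      lam k * (q k * wv k * ((x k) ^ 2 + ε ^ 2) + (2 - q k) * (wv k) ^ (q k / (q k - 2))) := by
    refine Finset.sum_nonneg fun k hk => ?_
    obtain ⟨h1', h2'⟩ := (Finset.mem_filter.1 hk).2
    refine mul_nonneg (hlam k).le (add_nonneg ?_ ?_)
    · exact mul_nonneg (mul_nonneg (by linarith) (hwv k).le) (by positivity)
    · exact mul_nonneg (by linarith) (Real.rpow_nonneg (hwv k).le _)
  have h3 : (0:ℝ) ≤ ∑ k ∈ Finset.univ.filter (fun k => q k = 2),
      2 * lam k * ((x k) ^ 2 + ε ^ 2) * ((wv k) ^ 2 - 2 * wv k + 2) := by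
    refine Finset.sum_nonneg fun k _ => ?_
    refine mul_nonneg (mul_nonneg (by linarith [hlam k]) (by positivity)) ?_
    nlinarith [sq_nonneg (wv k - 1)]
  linarith

/-- if `‖A‖₂ < 1`, the successive differences of the IRLS iterates
are square-summable, with
`(1 - ‖A‖₂²) ∑_{n≥1} ‖xⁿ - x^{n+1}‖₂² ≤ G(x¹,x¹,w¹,ε₁)`;
in particular `‖xⁿ - x^{n+1}‖₂ → 0`. -/
theorem stmt_9 {M N : ℕ} (A : Matrix (Fin M) (Fin N) ℝ) (hA : specNorm A < 1)
    (b : Fin M → ℝ) (lam q : Fin N → ℝ)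
    (hlam : ∀ k, 0 < lam k) (hq : ∀ k, 1 ≤ q k ∧ q k ≤ 2)
    (x : ℕ → Fin N → ℝ) (eps : ℕ → ℝ) (w : ℕ → Fin N → ℝ)
    (α : ℝ) (hα0 : 0 < α) (hα1 : α < 1) (heps0 : 0 < eps 0)
    (hw : ∀ n k, w n k = ((x n k) ^ 2 + (eps n) ^ 2) ^ ((q k - 2) / 2))
    (hxiter : ∀ n k, x (n + 1) k =
      (1 + lam k * q k * w n k)⁻¹
        * (x n k + Aᵀ.mulVec b k - Aᵀ.mulVec (A.mulVec (x n)) k))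
    (hepsiter : ∀ n, eps (n + 1) =
      min (eps n) (Real.sqrt (l2 (x (n + 1) - x n) + α ^ (n + 1)))) :
    (Summable fun n : ℕ => ∑ k, (x (n + 1) k - x (n + 2) k) ^ 2) ∧
    (1 - specNorm A ^ 2) * (∑' n : ℕ, ∑ k, (x (n + 1) k - x (n + 2) k) ^ 2)
      ≤ Gfun A b lam q (x 1) (x 1) (w 1) (eps 1) ∧
    Tendsto (fun n => l2 (x n - x (n + 1))) atTop (nhds 0) := by
  have hspec0 : 0 ≤ specNorm A := norm_nonneg _
  have hpos : 0 < 1 - specNorm A ^ 2 := by nlinarith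
  have hepspos : ∀ n, 0 < eps n := by
    intro n
    induction n with
    | zero => exact heps0
    | succ n ih =>
      rw [hepsiter n]
      refine lt_min ih (Real.sqrt_pos.2 ?_)
      have hl2 : 0 ≤ l2 (x (n + 1) - x n) := by unfold l2; exact Real.sqrt_nonneg _
      have := pow_pos hα0 (n + 1)
      linarith
  have hepsmono : ∀ n, eps (n + 1) ≤ eps n := fun n => by
    rw [hepsiter n]; exact min_le_left _ _
  have hwpos : ∀ n k, 0 < w n k := fun n k => by
    rw [hw n k]
    exact Real.rpow_pos_of_pos
      (add_pos_of_nonneg_of_pos (sq_nonneg _) (pow_pos (hepspos n) 2)) _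
  have hw2' : ∀ n k, q k = 2 → w n k = 1 := by
    intro n k h
    rw [hw n k, h]
    norm_num
  have hcpos : ∀ n k, 0 < 1 + lam k * q k * w n k := by
    intro n k
    have h1 : 0 < lam k * q k * w n k :=
      mul_pos (mul_pos (hlam k) (lt_of_lt_of_le one_pos (hq k).1)) (hwpos n k)
    linarith
  have hcx : ∀ n k, (1 + lam k * q k * w n k) * x (n + 1) k
      = x n k + Aᵀ.mulVec b k - Aᵀ.mulVec (A.mulVec (x n)) k := by
    intro n k
    rw [hxiter n k, ← mul_assoc, mul_inv_cancel₀ (ne_of_gt (hcpos n k)), one_mul]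
  have hstep1 : ∀ m, Gfun A b lam q (x (m + 1)) (x m) (w m) (eps m)
      ≤ Gfun A b lam q (x m) (x m) (w m) (eps m) - ∑ k, (x m k - x (m + 1) k) ^ 2 := by
    intro m
    have hd := irls_Gdiff A b lam q hq (w m) (hw2' m) (eps m) (x m) (x (m + 1)) (x m)
    have heq : ∑ k, ((1 + lam k * q k * w m k) * ((x m k) ^ 2 - (x (m + 1) k) ^ 2)
        - 2 * (x m k + Aᵀ.mulVec b k - Aᵀ.mulVec (A.mulVec (x m)) k) * (x m k - x (m + 1) k))
        = ∑ k, (1 + lam k * q k * w m k) * (x m k - x (m + 1) k) ^ 2 := by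
      refine Finset.sum_congr rfl fun k _ => ?_
      rw [← hcx m k]
      ring
    have hge : ∑ k, (x m k - x (m + 1) k) ^ 2
        ≤ ∑ k, (1 + lam k * q k * w m k) * (x m k - x (m + 1) k) ^ 2 := by
      refine Finset.sum_le_sum fun k _ => ?_
      have h1 := hcpos m k
      have h2 : 0 < lam k * q k * w m k :=
        mul_pos (mul_pos (hlam k) (lt_of_lt_of_le one_pos (hq k).1)) (hwpos m k)
      nlinarith [sq_nonneg (x m k - x (m + 1) k)]
    linarith [hd, hge, heq]
  have hstep3 : ∀ m, Gfun A b lam q (x (m + 1)) (x (m + 1)) (w (m + 1)) (eps (m + 1))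
      ≤ Gfun A b lam q (x (m + 1)) (x (m + 1)) (w m) (eps m) := by
    intro m
    unfold Gfun
    have hS4 : ∑ k ∈ Finset.univ.filter (fun k => 1 ≤ q k ∧ q k < 2),
        lam k * (q k * w (m + 1) k * ((x (m + 1) k) ^ 2 + eps (m + 1) ^ 2)
          + (2 - q k) * (w (m + 1) k) ^ (q k / (q k - 2)))
        ≤ ∑ k ∈ Finset.univ.filter (fun k => 1 ≤ q k ∧ q k < 2),
        lam k * (q k * w m k * ((x (m + 1) k) ^ 2 + eps m ^ 2)
          + (2 - q k) * (w m k) ^ (q k / (q k - 2))) := by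
      refine Finset.sum_le_sum fun k hk => ?_
      obtain ⟨hq1, hq2⟩ := (Finset.mem_filter.1 hk).2
      refine mul_le_mul_of_nonneg_left ?_ (hlam k).le
      have hs' : 0 < (x (m + 1) k) ^ 2 + eps (m + 1) ^ 2 :=
        add_pos_of_nonneg_of_pos (sq_nonneg _) (pow_pos (hepspos (m + 1)) 2)
      have hle : (x (m + 1) k) ^ 2 + eps (m + 1) ^ 2 ≤ (x (m + 1) k) ^ 2 + eps m ^ 2 := by
        have := pow_le_pow_left₀ (hepspos (m + 1)).le (hepsmono m) 2
        linarith
      have hp := irls_penalty (q k) ((x (m + 1) k) ^ 2 + eps m ^ 2)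
        ((x (m + 1) k) ^ 2 + eps (m + 1) ^ 2) (w m k) hq1 hq2 hs' hle (hwpos m k)
      rw [hw (m + 1) k]
      linarith [hp]
    have hS5 : ∑ k ∈ Finset.univ.filter (fun k => q k = 2),
        2 * lam k * ((x (m + 1) k) ^ 2 + eps (m + 1) ^ 2)
          * ((w (m + 1) k) ^ 2 - 2 * w (m + 1) k + 2)
        ≤ ∑ k ∈ Finset.univ.filter (fun k => q k = 2),
        2 * lam k * ((x (m + 1) k) ^ 2 + eps m ^ 2) * ((w m k) ^ 2 - 2 * w m k + 2) := by
      refine Finset.sum_le_sum fun k hk => ?_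
      have h2 := (Finset.mem_filter.1 hk).2
      rw [hw2' (m + 1) k h2, hw2' m k h2]
      have h3 : eps (m + 1) ^ 2 ≤ eps m ^ 2 :=
        pow_le_pow_left₀ (hepspos (m + 1)).le (hepsmono m) 2
      nlinarith [hlam k]
    linarith [hS4, hS5]
  have hdecr : ∀ m, (1 - specNorm A ^ 2) * (∑ k, (x m k - x (m + 1) k) ^ 2)
      ≤ Gfun A b lam q (x m) (x m) (w m) (eps m)
        - Gfun A b lam q (x (m + 1)) (x (m + 1)) (w (m + 1)) (eps (m + 1)) := by
    intro m
    have h1 := hstep1 m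
    have h2 := irls_Gshift A b lam q (x (m + 1)) (x m) (w m) (eps m)
    have h3 := hstep3 m
    have h4 := irls_spec A (x (m + 1) - x m)
    have h5 : ∑ k, ((x (m + 1) - x m) k) ^ 2 = ∑ k, (x m k - x (m + 1) k) ^ 2 :=
      Finset.sum_congr rfl fun k _ => by simp only [Pi.sub_apply]; ring
    have h6 : ∑ k, (x (m + 1) k - x m k) ^ 2 = ∑ k, (x m k - x (m + 1) k) ^ 2 :=
      Finset.sum_congr rfl fun k _ => by ring
    rw [h5] at h4
    rw [h6] at h2
    have h7 : (1 - specNorm A ^ 2) * (∑ k, (x m k - x (m + 1) k) ^ 2)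
        = (∑ k, (x m k - x (m + 1) k) ^ 2)
          - specNorm A ^ 2 * (∑ k, (x m k - x (m + 1) k) ^ 2) := by ring
    have h8 : (0:ℝ) ≤ ∑ k, (x m k - x (m + 1) k) ^ 2 :=
      Finset.sum_nonneg fun k _ => sq_nonneg _
    linarith [h1, h2, h3, h4, h7, h8]
  have htel : ∀ K : ℕ, ∑ n ∈ Finset.range K,
      (1 - specNorm A ^ 2) * (∑ k, (x (n + 1) k - x (n + 2) k) ^ 2)
      ≤ Gfun A b lam q (x 1) (x 1) (w 1) (eps 1) := by
    intro K
    have h1 : ∑ n ∈ Finset.range K,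
        (1 - specNorm A ^ 2) * (∑ k, (x (n + 1) k - x (n + 2) k) ^ 2)
        ≤ ∑ n ∈ Finset.range K,
          (Gfun A b lam q (x (n + 1)) (x (n + 1)) (w (n + 1)) (eps (n + 1))
            - Gfun A b lam q (x (n + 2)) (x (n + 2)) (w (n + 2)) (eps (n + 2))) := by
      refine Finset.sum_le_sum fun n _ => ?_
      exact hdecr (n + 1)
    have h2 : ∑ n ∈ Finset.range K,
        (Gfun A b lam q (x (n + 1)) (x (n + 1)) (w (n + 1)) (eps (n + 1))
          - Gfun A b lam q (x (n + 2)) (x (n + 2)) (w (n + 2)) (eps (n + 2)))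
        = Gfun A b lam q (x 1) (x 1) (w 1) (eps 1)
          - Gfun A b lam q (x (K + 1)) (x (K + 1)) (w (K + 1)) (eps (K + 1)) :=
      Finset.sum_range_sub'
        (fun n => Gfun A b lam q (x (n + 1)) (x (n + 1)) (w (n + 1)) (eps (n + 1))) K
    have h3 : 0 ≤ Gfun A b lam q (x (K + 1)) (x (K + 1)) (w (K + 1)) (eps (K + 1)) :=
      irls_Gnonneg A b lam q hlam hq (x (K + 1)) (w (K + 1)) (hwpos (K + 1)) (eps (K + 1))
    linarith
  have hsummable : Summable fun n : ℕ => ∑ k, (x (n + 1) k - x (n + 2) k) ^ 2 := by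
    apply summable_of_sum_range_le
      (c := Gfun A b lam q (x 1) (x 1) (w 1) (eps 1) / (1 - specNorm A ^ 2))
      (fun n => Finset.sum_nonneg fun k _ => sq_nonneg _)
    intro K
    rw [le_div_iff₀ hpos]
    have h1 := htel K
    rw [← Finset.mul_sum] at h1
    have h2 : (∑ n ∈ Finset.range K, ∑ k, (x (n + 1) k - x (n + 2) k) ^ 2)
        * (1 - specNorm A ^ 2)
        = (1 - specNorm A ^ 2) * ∑ n ∈ Finset.range K,
            ∑ k, (x (n + 1) k - x (n + 2) k) ^ 2 := mul_comm _ _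
    linarith
  refine ⟨hsummable, ?_, ?_⟩
  · rw [← tsum_mul_left]
    exact Summable.tsum_le_of_sum_range_le (hsummable.mul_left _) htel
  · have h0 : Tendsto (fun n => ∑ k, (x (n + 1) k - x (n + 2) k) ^ 2) atTop (nhds 0) :=
      hsummable.tendsto_atTop_zero
    have h1 : Tendsto (fun n => Real.sqrt (∑ k, (x (n + 1) k - x (n + 2) k) ^ 2))
        atTop (nhds 0) := by
      have := (Real.continuous_sqrt.tendsto 0).comp h0
      simpa [Function.comp_def] using this
    have heq : (fun n : ℕ => l2 (x (n + 1) - x (n + 2)))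
        = fun n => Real.sqrt (∑ k, (x (n + 1) k - x (n + 2) k) ^ 2) := by
      funext n
      unfold l2
      congr 1
    have h2 : Tendsto (fun n : ℕ => l2 (x (n + 1) - x (n + 2))) atTop (nhds 0) := by
      rw [heq]; exact h1
    exact (tendsto_add_atTop_iff_nat 1).1 h2
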